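/- Let M be a real n×n matrix with n ≥ 1 and let r > 0. If every eigenvalue μ of M (every root in ℂ of its characteristic polynomial) satisfies Re(μ) ≤ −r, then det(−M) ≥ rⁿ. -/

import Mathlib

open Matrix Polynomial

lemma pow_card_le_prod_aux (r : ℝ) (hr : 0 ≤ r) (s : Multiset ℝ)
    (h : ∀ x ∈ s, r ≤ x) : r ^ Multiset.card s ≤ s.prod := by
  induction s using Multiset.induction with
  | empty => simp
  | cons a t ih =>
    simp only [Multiset.card_cons, Multiset.prod_cons, pow_succ, mul_comm]
    have ha : r ≤ a := h a (Multiset.mem_cons_self a t)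
    have ht : r ^ Multiset.card t ≤ t.prod := ih fun x hx => h x (Multiset.mem_cons_of_mem hx)
    have h0 : (0:ℝ) ≤ r ^ Multiset.card t := pow_nonneg hr _
    nlinarith

/-- If `n ≥ 1`, `r > 0` and every eigenvalue `μ` of the real `n × n` matrix `M`
(every root in `ℂ` of its characteristic polynomial) satisfies `Re μ ≤ -r`,
then `det (-M) ≥ r ^ n`. -/
theorem stmt2 (n : ℕ) (hn : 1 ≤ n) (M : Matrix (Fin n) (Fin n) ℝ) (r : ℝ) (hr : 0 < r)
    (h : ∀ μ : ℂ, ((M.charpoly).map (algebraMap ℝ ℂ)).IsRoot μ → μ.re ≤ -r) :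
    r ^ n ≤ (-M).det := by
  set p := M.charpoly with hp
  have hmono : p.Monic := M.charpoly_monic
  have hdegn : p.natDegree = n := M.charpoly_natDegree_eq_dim.trans (by simp)
  have hdeg : 0 < p.degree := by
    rw [degree_eq_natDegree hmono.ne_zero, hdegn]
    exact_mod_cast hn
  -- det (-M) = p.eval 0
  have hdet : (-M).det = p.eval 0 := by
    rw [det_neg, M.det_eq_sign_charpoly_coeff, ← coeff_zero_eq_eval_zero, ← mul_assoc,
      ← mul_pow]
    simp
    rfl
  -- real roots are ≤ -r
  have hroots : ∀ x : ℝ, p.IsRoot x → x ≤ -r := by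
    intro x hx
    simpa using h _ (hx.map (f := algebraMap ℝ ℂ))
  -- positivity of p.eval 0
  have hpos : 0 < p.eval 0 := by
    have htop : Filter.Tendsto (fun x => p.eval x) Filter.atTop Filter.atTop :=
      p.tendsto_atTop_of_leadingCoeff_nonneg hdeg (by simp [hmono.leadingCoeff])
    obtain ⟨x₀, hx₀, hx₀pos⟩ := ((htop.eventually_gt_atTop 0).and
      (Filter.eventually_ge_atTop 0)).exists
    by_contra hle
    push_neg at hle
    obtain ⟨c, hc, hcr⟩ := intermediate_value_Icc hx₀pos
      (p.continuousOn (s := Set.Icc 0 x₀)) (Set.mem_Icc.mpr ⟨hle, le_of_lt hx₀⟩)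
    have := hroots c hcr
    have : (0 : ℝ) ≤ c := hc.1
    linarith [hroots c hcr, hr]
  -- norm bound via complex roots
  set q := p.map (algebraMap ℝ ℂ) with hq
  have hqm : q.Monic := hmono.map _
  have hqsplits : q.Splits := IsAlgClosed.splits q
  have hqdeg : q.natDegree = n := by rw [hq, natDegree_map, hdegn]
  have hcard : Multiset.card q.roots = n := by
    have := hqsplits.natDegree_eq_card_roots.symm
    simpa [hqdeg] using this
  have hprod : q = (q.roots.map fun a => X - C a).prod :=
    hqsplits.eq_prod_roots_of_monic hqm
  have hnorm : r ^ n ≤ ‖q.eval 0‖ := by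
    rw [hprod, eval_multiset_prod, Multiset.map_map]
    rw [show ∀ s : Multiset ℂ, ‖s.prod‖ = (s.map (fun x => ‖x‖)).prod from
      fun s => map_multiset_prod normHom s, Multiset.map_map]
    calc r ^ n = r ^ Multiset.card (q.roots.map ((fun x : ℂ => ‖x‖) ∘ eval 0 ∘ fun a => X - C a)) := by
          rw [Multiset.card_map, hcard]
      _ ≤ _ := by
          apply pow_card_le_prod_aux r hr.le
          intro x hx
          obtain ⟨μ, hμ, rfl⟩ := Multiset.mem_map.mp hx
          have hroot : q.IsRoot μ := isRoot_of_mem_roots hμ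
          have hre := h μ hroot
          have h1 : r ≤ |μ.re| := by
            rw [abs_of_nonpos (by linarith)]; linarith
          calc r ≤ |μ.re| := h1
            _ ≤ ‖μ‖ := Complex.abs_re_le_norm μ
            _ = ‖eval 0 (X - C μ)‖ := by simp
  have hq0 : q.eval 0 = ((eval 0 p : ℝ) : ℂ) := by
    rw [hq, eval_map]
    simp [eval₂_at_zero, coeff_zero_eq_eval_zero]
  rw [hq0] at hnorm
  rw [hdet]
  calc r ^ n ≤ ‖((eval 0 p : ℝ) : ℂ)‖ := hnorm
    _ = |p.eval 0| := Complex.norm_real _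
    _ = p.eval 0 := abs_of_pos hpos
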